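/- arXiv:1603.08938 — 2 statements merged into one kernel-verified Lean document; each statement's English description precedes it below -/
import Mathlib

section
/- Let k be a field, 𝒜 a finite-dimensional category, and 𝒞 := Mod-𝒜. Let F, G : 𝒞 ⥤ 𝒞 be sweet endofunctors, i.e. k-linear functors each admitting a biadjoint (a functor that is simultaneously left and right adjoint to it). Let η : F ⟶ G be a natural transformation such that η_L : F(L) → G(L) is an isomorphism for every simple object L of 𝒞. Then η is an isomorphism, i.e. η_V is an isomorphism for every object V of 𝒞. -/
open CategoryTheory CategoryTheory.Limits Opposite

section
variable (k : Type) [Field k]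

/-- `k`-linearity on the opposite category. -/
instance oppositeLinear (C : Type*) [Category C] [Preadditive C] [CategoryTheory.Linear k C] :
    CategoryTheory.Linear k Cᵒᵖ where
  homModule X Y := Equiv.module k (opEquiv X Y)
  smul_comp _ _ _ _ _ _ :=
    Quiver.Hom.unop_inj (CategoryTheory.Linear.comp_smul _ _ _ _ _ _)
  comp_smul _ _ _ _ _ _ :=
    Quiver.Hom.unop_inj (CategoryTheory.Linear.smul_comp _ _ _ _ _ _)

@[simp] lemma unop_ksmul {C : Type*} [Category C] [Preadditive C]
    [CategoryTheory.Linear k C] {X Y : Cᵒᵖ} (r : k) (f : X ⟶ Y) :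
    (r • f).unop = r • f.unop := rfl

/-- The property of a functor between `k`-linear categories being `k`-linear
(in particular additive). -/
def IsKLinear {C D : Type*} [Category C] [Category D] [Preadditive C] [Preadditive D]
    [CategoryTheory.Linear k C] [CategoryTheory.Linear k D] (F : C ⥤ D) : Prop :=
  ∃ h : F.Additive, Functor.Linear k F

/-- The category `Mod-A` of right modules over a small `k`-linear category `A`:
`k`-linear functors `Aᵒᵖ ⥤ ModuleCat k`. -/
abbrev RMod (A : Type) [SmallCategory A] [Preadditive A] [CategoryTheory.Linear k A] :=
  ObjectProperty.FullSubcategory (fun F : Aᵒᵖ ⥤ ModuleCat.{0} k => IsKLinear k F)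

/-- The category `A-Mod` of left modules over a small `k`-linear category `A`:
`k`-linear functors `A ⥤ ModuleCat k`. -/
abbrev LMod (A : Type) [SmallCategory A] [Preadditive A] [CategoryTheory.Linear k A] :=
  ObjectProperty.FullSubcategory (fun F : A ⥤ ModuleCat.{0} k => IsKLinear k F)

variable {k}

instance linYonObjLinear {C : Type*} [Category C] [Preadditive C] [CategoryTheory.Linear k C]
    (x : C) : ((linearYoneda k C).obj x).Linear k where
  map_smul f r := by
    ext (g : _ ⟶ x)
    exact CategoryTheory.Linear.smul_comp _ _ _ _ _ _

instance linCoyonObjLinear {C : Type*} [Category C] [Preadditive C] [CategoryTheory.Linear k C]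
    (x : Cᵒᵖ) : ((linearCoyoneda k C).obj x).Linear k where
  map_smul f r := by
    ext (g : x.unop ⟶ _)
    exact CategoryTheory.Linear.comp_smul _ _ _ _ _ _

variable (k)
variable (A : Type) [SmallCategory A] [Preadditive A] [CategoryTheory.Linear k A]

/-- The representable right `A`-module `Hom_A(−, x)`. -/
def reprR (x : A) : RMod k A :=
  ⟨(linearYoneda k A).obj x, inferInstance, inferInstance⟩

/-- The representable left `A`-module `Hom_A(x, −)`. -/
def reprL (x : A) : LMod k A :=
  ⟨(linearCoyoneda k A).obj (op x), inferInstance, inferInstance⟩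

/-- An endofunctor is sweet if it admits a biadjoint, i.e. a functor that is
simultaneously left and right adjoint to it. -/
def IsSweet {C : Type*} [Category C] (E : C ⥤ C) : Prop :=
  ∃ F : C ⥤ C, Nonempty (F ⊣ E) ∧ Nonempty (E ⊣ F)

/-!
STATEMENT 5: if `F` and `G` are sweet (`k`-linear) endofunctors of `Mod-A` for a
finite-dimensional category `A`, and `η : F ⟶ G` is a natural transformation whose
component at every simple object is an isomorphism, then `η` is an isomorphism
(equivalently, each component `η_V` is an isomorphism).
-/

namespace St5
variable {k : Type} [Field k] {A : Type} [SmallCategory A] [Preadditive A]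
  [CategoryTheory.Linear k A]

/-- component of a morphism of right modules, as a linear map -/
abbrev _root_.CategoryTheory.InducedCategory.Hom.app {M N : RMod k A}
    (f : @InducedCategory.Hom (RMod k A) (Aᵒᵖ ⥤ ModuleCat.{0} k) _
      ObjectProperty.FullSubcategory.obj M N) (x : Aᵒᵖ) :
    M.obj.obj x →ₗ[k] N.obj.obj x := (f.hom.app x).hom

/-- data of a morphism of right modules -/
structure HomData (M N : RMod k A) where
  app : ∀ x : Aᵒᵖ, M.obj.obj x →ₗ[k] N.obj.obj x
  naturality : ∀ ⦃x y : Aᵒᵖ⦄ (f : x ⟶ y),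
    (app y).comp (M.obj.map f).hom = (N.obj.map f).hom.comp (app x)

/-- the morphism given by its data -/
def HomData.toHom {M N : RMod k A} (d : HomData M N) : M ⟶ N :=
  ⟨{ app := fun x => ModuleCat.ofHom (d.app x)
     naturality := fun _ _ f => ModuleCat.hom_ext (d.naturality f) }⟩

lemma mapAdd (M : RMod k A) {x y : Aᵒᵖ} (f g : x ⟶ y) :
    M.obj.map (f + g) = M.obj.map f + M.obj.map g := by
  obtain ⟨hA, hL⟩ := M.property
  exact hA.map_add

lemma mapSmul (M : RMod k A) {x y : Aᵒᵖ} (r : k) (f : x ⟶ y) :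
    M.obj.map (r • f) = r • M.obj.map f := by
  obtain ⟨hA, hL⟩ := M.property
  exact hL.map_smul f r

lemma hom_ext {M N : RMod k A} {f g : M ⟶ N} (h : ∀ x, f.app x = g.app x) : f = g :=
  InducedCategory.hom_ext (NatTrans.ext (funext fun x => ModuleCat.hom_ext (h x)))

@[simp] lemma comp_app {M N P : RMod k A} (f : M ⟶ N) (g : N ⟶ P) (x : Aᵒᵖ) :
    (f ≫ g).app x = (g.app x).comp (f.app x) := rfl

@[simp] lemma zero_app (M N : RMod k A) (x : Aᵒᵖ) : (0 : M ⟶ N).app x = 0 := rfl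

@[simp] lemma id_app (M : RMod k A) (x : Aᵒᵖ) : (𝟙 M : M ⟶ M).app x = LinearMap.id := rfl

/-- A subfunctor of a right module `M`. -/
@[ext] structure Sub (M : RMod k A) where
  sub : ∀ x : Aᵒᵖ, Submodule k (M.obj.obj x)
  map_mem : ∀ {x y : Aᵒᵖ} (f : x ⟶ y) {m : M.obj.obj x}, m ∈ sub x → M.obj.map f m ∈ sub y

namespace Sub

variable {M : RMod k A}

instance : PartialOrder (Sub M) where
  le U V := ∀ x, U.sub x ≤ V.sub x
  le_refl U x := le_rfl
  le_trans U V W h h' x := (h x).trans (h' x)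
  le_antisymm U V h h' := by ext x m; exact ⟨fun hm => h x hm, fun hm => h' x hm⟩

instance : OrderTop (Sub M) where
  top := ⟨fun _ => ⊤, by intro x y f m hm; trivial⟩
  le_top U x := le_top

instance : OrderBot (Sub M) where
  bot := ⟨fun _ => ⊥, by
    intro x y f m hm
    simp only [Submodule.mem_bot] at hm ⊢
    rw [hm]; exact map_zero _⟩
  bot_le U x := bot_le

lemma eq_top_iff' (U : Sub M) : U = ⊤ ↔ ∀ x m, m ∈ U.sub x :=
  ⟨fun h x m => h ▸ trivial, fun h => le_antisymm le_top (fun x m _ => h x m)⟩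

/-- The subfunctor as a functor. -/
def toFun (U : Sub M) : Aᵒᵖ ⥤ ModuleCat.{0} k where
  obj x := ModuleCat.of k (U.sub x)
  map f := ModuleCat.ofHom ((M.obj.map f).hom.restrict (fun m hm => U.map_mem f hm))
  map_id := by
    intro x
    apply ModuleCat.hom_ext
    apply LinearMap.ext; intro m; apply Subtype.ext
    simp only [LinearMap.restrict_coe_apply, CategoryTheory.Functor.map_id]
    rfl
  map_comp := by
    intro x y z f g
    apply ModuleCat.hom_ext
    apply LinearMap.ext; intro m; apply Subtype.ext
    simp only [LinearMap.restrict_coe_apply, CategoryTheory.Functor.map_comp]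
    rfl

instance (U : Sub M) : (U.toFun).Additive :=
  ⟨fun {x y f g} => by
    apply ModuleCat.hom_ext
    apply LinearMap.ext; intro m; apply Subtype.ext
    simp only [toFun, LinearMap.restrict_coe_apply, mapAdd M f g, LinearMap.add_apply]
    rfl⟩

instance (U : Sub M) : (U.toFun).Linear k :=
  ⟨fun {x y} f r => by
    apply ModuleCat.hom_ext
    apply LinearMap.ext; intro m; apply Subtype.ext
    simp only [toFun, LinearMap.restrict_coe_apply, mapSmul M r f, LinearMap.smul_apply]
    rfl⟩

/-- The subfunctor as an object of `RMod`. -/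
def toObj (U : Sub M) : RMod k A := ⟨U.toFun, inferInstance, inferInstance⟩

@[simp] lemma toObj_map_val (U : Sub M) {x y : Aᵒᵖ} (f : x ⟶ y) (m : (U.toObj).obj.obj x) :
    ((U.toObj).obj.map f m).1 = M.obj.map f m.1 := rfl

/-- Inclusion morphism. -/
def incl (U : Sub M) : U.toObj ⟶ M := HomData.toHom {
  app x := (U.sub x).subtype
  naturality := by intro x y f; apply LinearMap.ext; intro m; rfl }

@[simp] lemma incl_app (U : Sub M) (x : Aᵒᵖ) (m : (U.toObj).obj.obj x) :
    (U.incl).app x m = m.1 := rfl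

lemma incl_injective (U : Sub M) (x : Aᵒᵖ) : Function.Injective ((U.incl).app x) :=
  fun a b h => Subtype.ext h

end Sub
end St5

namespace St5
section
variable {k : Type} [Field k] {A : Type} [SmallCategory A] [Preadditive A]
  [CategoryTheory.Linear k A]

/-- naturality at the level of elements -/
lemma nat_app {M N : RMod k A} (f : M ⟶ N) {x y : Aᵒᵖ} (g : x ⟶ y) (m : M.obj.obj x) :
    f.app y (M.obj.map g m) = N.obj.map g (f.app x m) := by
  have h := f.hom.naturality g
  exact ConcreteCategory.congr_hom h m

namespace Sub
variable {M : RMod k A}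

/-- The subfunctor generated by a finite list of elements. -/
def genSub (L : List (Σ x : Aᵒᵖ, M.obj.obj x)) : Sub M where
  sub y := Submodule.span k {m | ∃ p ∈ L, ∃ f : p.1 ⟶ y, M.obj.map f p.2 = m}
  map_mem := by
    intro x y f m hm
    have hle : Submodule.map (M.obj.map f).hom
        (Submodule.span k {m | ∃ p ∈ L, ∃ g : p.1 ⟶ x, M.obj.map g p.2 = m})
        ≤ Submodule.span k {m | ∃ p ∈ L, ∃ g : p.1 ⟶ y, M.obj.map g p.2 = m} := by
      refine (Submodule.map_span_le _ _ _).mpr ?_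
      rintro m ⟨p, hp, g, rfl⟩
      refine Submodule.subset_span ⟨p, hp, g ≫ f, ?_⟩
      rw [M.obj.map_comp]; rfl
    exact hle (Submodule.mem_map_of_mem hm)

lemma self_mem_genSub {L : List (Σ x : Aᵒᵖ, M.obj.obj x)} {p} (hp : p ∈ L) :
    p.2 ∈ (genSub L).sub p.1 := by
  refine Submodule.subset_span ⟨p, hp, 𝟙 p.1, ?_⟩
  rw [M.obj.map_id]; rfl

lemma genSub_le {L : List (Σ x : Aᵒᵖ, M.obj.obj x)} {U : Sub M}
    (h : ∀ p ∈ L, p.2 ∈ U.sub p.1) : genSub L ≤ U := by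
  intro y
  refine Submodule.span_le.mpr ?_
  rintro m ⟨p, hp, f, rfl⟩
  exact U.map_mem f (h p hp)

/-- image subfunctor -/
def smap {M N : RMod k A} (f : M ⟶ N) (U : Sub M) : Sub N where
  sub x := (U.sub x).map (f.app x)
  map_mem := by
    rintro x y g m ⟨m', hm', rfl⟩
    exact ⟨M.obj.map g m', U.map_mem g hm', nat_app f g m'⟩

/-- preimage subfunctor -/
def comap {M N : RMod k A} (f : M ⟶ N) (V : Sub N) : Sub M where
  sub x := (V.sub x).comap (f.app x)
  map_mem := by
    intro x y g m hm
    simp only [Submodule.mem_comap] at hm ⊢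
    rw [nat_app f g m]
    exact V.map_mem g hm

/-- kernel subfunctor -/
def kerSub {M N : RMod k A} (f : M ⟶ N) : Sub M where
  sub x := LinearMap.ker (f.app x)
  map_mem := by
    intro x y g m hm
    simp only [LinearMap.mem_ker] at hm ⊢
    rw [nat_app f g m, hm, map_zero]

end Sub

/-- finitely generated module -/
def FGobj (M : RMod k A) : Prop := ∃ L, Sub.genSub (M := M) L = ⊤

lemma FGobj_of_surj {M N : RMod k A} (f : M ⟶ N) (hs : ∀ x, Function.Surjective (f.app x))
    (h : FGobj M) : FGobj N := by
  obtain ⟨L, hL⟩ := h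
  refine ⟨L.map (fun p => ⟨p.1, f.app p.1 p.2⟩), ?_⟩
  rw [Sub.eq_top_iff']
  intro x n
  obtain ⟨m, rfl⟩ := hs x n
  have hm : m ∈ (Sub.genSub L).sub x := by rw [hL]; trivial
  -- push through f
  have hsub : Submodule.map (f.app x) ((Sub.genSub L).sub x)
      ≤ (Sub.genSub (L.map (fun p => ⟨p.1, f.app p.1 p.2⟩))).sub x := by
    refine (Submodule.map_span_le _ _ _).mpr ?_
    rintro m ⟨p, hp, g, rfl⟩
    refine Submodule.subset_span ⟨⟨p.1, f.app p.1 p.2⟩, List.mem_map_of_mem hp, g, ?_⟩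
    exact (nat_app f g p.2).symm
  exact hsub (Submodule.mem_map_of_mem hm)

end
end St5

namespace St5
section
variable {k : Type} [Field k] {A : Type} [SmallCategory A] [Preadditive A]
  [CategoryTheory.Linear k A] {M : RMod k A}

namespace Sub

/-- quotient functor -/
def quotFun (U : Sub M) : Aᵒᵖ ⥤ ModuleCat.{0} k where
  obj x := ModuleCat.of k (M.obj.obj x ⧸ U.sub x)
  map {x y} f := ModuleCat.ofHom
    (Submodule.mapQ (U.sub x) (U.sub y) (M.obj.map f).hom (fun m hm => U.map_mem f hm))
  map_id := by
    intro x
    apply ModuleCat.hom_ext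
    apply Submodule.linearMap_qext
    apply LinearMap.ext; intro m
    simp [Submodule.mapQ_apply]
  map_comp := by
    intro x y z f g
    apply ModuleCat.hom_ext
    apply Submodule.linearMap_qext
    apply LinearMap.ext; intro m
    simp [Submodule.mapQ_apply]

instance (U : Sub M) : (U.quotFun).Additive :=
  ⟨fun {x y f g} => by
    apply ModuleCat.hom_ext
    apply Submodule.linearMap_qext
    apply LinearMap.ext; intro m
    have h1 : M.obj.map (f + g) = M.obj.map f + M.obj.map g := mapAdd M f g
    show Submodule.Quotient.mk (p := U.sub y) (M.obj.map (f + g) m)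
      = Submodule.Quotient.mk (p := U.sub y) (M.obj.map f m)
        + Submodule.Quotient.mk (p := U.sub y) (M.obj.map g m)
    rw [h1]
    rfl⟩

instance (U : Sub M) : (U.quotFun).Linear k :=
  ⟨fun {x y} f r => by
    apply ModuleCat.hom_ext
    apply Submodule.linearMap_qext
    apply LinearMap.ext; intro m
    have h1 : M.obj.map (r • f) = r • M.obj.map f := mapSmul M r f
    show Submodule.Quotient.mk (p := U.sub y) (M.obj.map (r • f) m)
      = r • Submodule.Quotient.mk (p := U.sub y) (M.obj.map f m)
    rw [h1]
    rfl⟩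

/-- quotient object -/
def quotObj (U : Sub M) : RMod k A := ⟨U.quotFun, inferInstance, inferInstance⟩

/-- quotient projection -/
def proj (U : Sub M) : M ⟶ U.quotObj := HomData.toHom {
  app x := (U.sub x).mkQ
  naturality := by
    intro x y f
    apply LinearMap.ext; intro m
    exact (Submodule.mapQ_apply (p := U.sub x) (U.sub y) (M.obj.map f).hom
      (h := fun m hm => U.map_mem f hm) m).symm }

lemma proj_surjective (U : Sub M) (x : Aᵒᵖ) : Function.Surjective ((U.proj).app x) :=
  Submodule.mkQ_surjective _

lemma proj_zero_iff (U : Sub M) {x : Aᵒᵖ} (m : M.obj.obj x) :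
    (U.proj).app x m = 0 ↔ m ∈ U.sub x := Submodule.Quotient.mk_eq_zero _

/-- supremum of a nonempty chain -/
def chainSub (c : Set (Sub M)) (hne : c.Nonempty) (hc : IsChain (· ≤ ·) c) : Sub M where
  sub x := ⨆ (U : c), (U : Sub M).sub x
  map_mem := by
    have : Nonempty c := hne.to_subtype
    intro x y f m hm
    have hd : Directed (· ≤ ·) (fun U : c => (U : Sub M).sub x) := by
      intro U V
      rcases eq_or_ne U V with rfl | hUV
      · exact ⟨U, le_rfl, le_rfl⟩
      · rcases hc.total U.2 V.2 with h | h
        · exact ⟨V, h x, le_rfl⟩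
        · exact ⟨U, le_rfl, h x⟩
    obtain ⟨U, hU⟩ := (Submodule.mem_iSup_of_directed _ hd).mp hm
    exact le_iSup (fun U : c => (U : Sub M).sub y) U ((U : Sub M).map_mem f hU)

lemma le_chainSub {c : Set (Sub M)} (hne : c.Nonempty) (hc : IsChain (· ≤ ·) c)
    {U : Sub M} (hU : U ∈ c) : U ≤ chainSub c hne hc :=
  fun x => le_iSup (fun V : c => (V : Sub M).sub x) ⟨U, hU⟩

lemma chain_common {c : Set (Sub M)} (hne : c.Nonempty) (hc : IsChain (· ≤ ·) c)
    (L : List (Σ x : Aᵒᵖ, M.obj.obj x))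
    (h : ∀ p ∈ L, ∃ U ∈ c, p.2 ∈ (U : Sub M).sub p.1) :
    ∃ U ∈ c, ∀ p ∈ L, p.2 ∈ (U : Sub M).sub p.1 := by
  induction L with
  | nil => obtain ⟨U, hU⟩ := hne; exact ⟨U, hU, by simp⟩
  | cons p L ih =>
    obtain ⟨U₁, hU₁, hmem₁⟩ := ih (fun q hq => h q (List.mem_cons_of_mem _ hq))
    obtain ⟨U₂, hU₂, hmem₂⟩ := h p (List.mem_cons_self)
    rcases eq_or_ne U₁ U₂ with rfl | hd
    · refine ⟨U₁, hU₁, fun q hq => ?_⟩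
      rcases List.mem_cons.mp hq with rfl | hq
      exacts [hmem₂, hmem₁ _ hq]
    rcases hc.total hU₁ hU₂ with hle | hle
    · refine ⟨U₂, hU₂, fun q hq => ?_⟩
      rcases List.mem_cons.mp hq with rfl | hq
      exacts [hmem₂, hle _ (hmem₁ _ hq)]
    · refine ⟨U₁, hU₁, fun q hq => ?_⟩
      rcases List.mem_cons.mp hq with rfl | hq
      exacts [hle _ hmem₂, hmem₁ _ hq]

lemma chainSub_ne_top (hfg : FGobj M) {c : Set (Sub M)} (hne : c.Nonempty)
    (hc : IsChain (· ≤ ·) c) (hproper : ∀ U ∈ c, U ≠ ⊤) :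
    chainSub c hne hc ≠ ⊤ := by
  intro htop
  obtain ⟨L, hL⟩ := hfg
  have : Nonempty c := hne.to_subtype
  have hall : ∀ p ∈ L, ∃ U ∈ c, p.2 ∈ (U : Sub M).sub p.1 := by
    intro p hp
    have hm : p.2 ∈ (chainSub c hne hc).sub p.1 := by rw [htop]; trivial
    have hd : Directed (· ≤ ·) (fun U : c => (U : Sub M).sub p.1) := by
      intro U V
      rcases eq_or_ne U V with rfl | hUV
      · exact ⟨U, le_rfl, le_rfl⟩
      · rcases hc.total U.2 V.2 with h | h
        · exact ⟨V, h p.1, le_rfl⟩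
        · exact ⟨U, le_rfl, h p.1⟩
    obtain ⟨U, hU⟩ := (Submodule.mem_iSup_of_directed _ hd).mp hm
    exact ⟨U, U.2, hU⟩
  obtain ⟨U, hUc, hU⟩ := chain_common hne hc L hall
  have : (⊤ : Sub M) ≤ U := hL ▸ genSub_le hU
  exact hproper U hUc (le_antisymm le_top this)

/-- existence of a maximal proper subfunctor above a given proper one -/
lemma exists_maximal (hfg : FGobj M) (U₀ : Sub M) (h : U₀ ≠ ⊤) :
    ∃ Um : Sub M, U₀ ≤ Um ∧ Um ≠ ⊤ ∧ ∀ V, Um ≤ V → V ≠ ⊤ → V = Um := by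
  obtain ⟨Um, hle, hmax⟩ := zorn_le_nonempty₀ {U : Sub M | U ≠ ⊤}
    (fun c hcs hchain y hy => by
      have hne : c.Nonempty := ⟨y, hy⟩
      exact ⟨chainSub c hne hchain, chainSub_ne_top hfg hne hchain (fun U hU => hcs hU),
        fun z hz => le_chainSub hne hchain hz⟩) U₀ h
  exact ⟨Um, hle, hmax.prop, fun V hUmV hV => le_antisymm (hmax.2 hV hUmV) hUmV⟩

end Sub
end
end St5

namespace St5
section
variable {k : Type} [Field k] {A : Type} [SmallCategory A] [Preadditive A]
  [CategoryTheory.Linear k A]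

/-- Pointwise bijective morphisms in `RMod` are isomorphisms. -/
lemma isIso_of_bijective {M N : RMod k A} (f : M ⟶ N)
    (h : ∀ x, Function.Bijective (f.app x)) : IsIso f := by
  let e : ∀ x, M.obj.obj x ≃ₗ[k] N.obj.obj x := fun x => LinearEquiv.ofBijective (f.app x) (h x)
  let g : N ⟶ M := HomData.toHom
    { app := fun x => ((e x).symm : N.obj.obj x →ₗ[k] M.obj.obj x)
      naturality := by
        intro x y u
        apply LinearMap.ext; intro n
        apply (h y).injective
        show f.app y ((e y).symm (N.obj.map u n)) = f.app y (M.obj.map u ((e x).symm n))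
        rw [nat_app f u]
        have h1 : f.app y ((e y).symm (N.obj.map u n)) = N.obj.map u n :=
          (e y).apply_symm_apply _
        have h2 : f.app x ((e x).symm n) = n := (e x).apply_symm_apply _
        rw [h1, h2] }
  refine ⟨g, ?_, ?_⟩
  · apply hom_ext; intro x; apply LinearMap.ext; intro m
    exact (e x).symm_apply_apply m
  · apply hom_ext; intro x; apply LinearMap.ext; intro n
    exact (e x).apply_symm_apply n

lemma hom_eq_zero_iff {M N : RMod k A} (f : M ⟶ N) : f = 0 ↔ ∀ x m, f.app x m = 0 := by
  constructor
  · intro h x m; rw [h]; rfl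
  · intro h; apply hom_ext; intro x; apply LinearMap.ext; intro m; exact h x m

/-- A mono in `RMod` is pointwise injective. -/
lemma inj_of_mono {M N : RMod k A} (f : M ⟶ N) [Mono f] (x : Aᵒᵖ) :
    Function.Injective (f.app x) := by
  have hcomp : (Sub.kerSub f).incl ≫ f = (0 : (Sub.kerSub f).toObj ⟶ M) ≫ f := by
    rw [hom_eq_zero_iff ((Sub.kerSub f).incl ≫ f) |>.mpr, zero_comp]
    intro y m
    exact m.2
  have h0 : (Sub.kerSub f).incl = 0 := (cancel_mono f).mp hcomp
  have hker : LinearMap.ker (f.app x) = ⊥ := by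
    rw [Submodule.eq_bot_iff]
    intro m hm
    have := congrArg (fun (g : (Sub.kerSub f).toObj ⟶ M) => g.app x ⟨m, hm⟩) h0
    exact this
  exact LinearMap.ker_eq_bot.mp hker

/-- quotient by a maximal subfunctor is a simple object -/
lemma simple_of_maximal {M : RMod k A} (Um : Sub M) (hproper : Um ≠ ⊤)
    (hmax : ∀ V, Um ≤ V → V ≠ ⊤ → V = Um) : Simple (Sub.quotObj Um) := by
  -- a nonzero element of the quotient
  obtain ⟨x₀, m₀, hm₀⟩ : ∃ x m, m ∉ Um.sub x := by
    by_contra hcon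
    push_neg at hcon
    exact hproper ((Sub.eq_top_iff' Um).mpr hcon)
  constructor
  intro Y f hMono
  constructor
  · intro hIso h0
    -- identity of quotObj would be zero
    have : (𝟙 (Sub.quotObj Um) : _ ⟶ _) = 0 := by
      have h2 : (𝟙 (Sub.quotObj Um) : _ ⟶ _) = inv f ≫ f := (IsIso.inv_hom_id f).symm
      exact h2.trans ((congrArg (fun t => inv f ≫ t) h0).trans comp_zero)
    have h1 := congrArg (fun (g : Sub.quotObj Um ⟶ Sub.quotObj Um) =>
      g.app x₀ ((Um.proj).app x₀ m₀)) this
    simp only [id_app, zero_app] at h1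
    rw [LinearMap.id_apply] at h1
    exact hm₀ ((Um.proj_zero_iff m₀).mp (by exact h1))
  · intro hne
    -- f is pointwise injective, show pointwise surjective
    have hinj := fun x => inj_of_mono f x
    -- the preimage of the image of f in M
    set V : Sub M := Sub.comap Um.proj (Sub.smap f ⊤) with hV
    have hUmV : Um ≤ V := by
      intro x m hm
      have h1 : (Um.proj).app x m = 0 := (Um.proj_zero_iff m).mpr hm
      exact Submodule.mem_comap.mpr (by rw [h1]; exact ⟨0, trivial, map_zero _⟩)
    have hVne : V ≠ Um := by
      intro hEq
      apply hne
      rw [hom_eq_zero_iff]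
      intro x yel
      obtain ⟨m, hmk⟩ := Um.proj_surjective x (f.app x yel)
      have hmV : m ∈ V.sub x := Submodule.mem_comap.mpr ⟨yel, trivial, hmk.symm⟩
      rw [hEq] at hmV
      rw [← hmk]
      exact (Um.proj_zero_iff m).mpr hmV
    have hVtop : V = ⊤ := by
      by_contra hVt
      exact hVne (hmax V hUmV hVt)
    have hsurj : ∀ x, Function.Surjective (f.app x) := by
      intro x s
      obtain ⟨m, hmk⟩ := Um.proj_surjective x s
      have hmV : m ∈ V.sub x := by rw [hVtop]; trivial
      obtain ⟨yel, _, hy⟩ := Submodule.mem_map.mp (Submodule.mem_comap.mp hmV)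
      exact ⟨yel, by rw [hy, hmk]⟩
    exact isIso_of_bijective f (fun x => ⟨hinj x, hsurj x⟩)

/-- Existence of simple quotients killing a given proper subfunctor. -/
lemma exists_simple_quot {M : RMod k A} (hfg : FGobj M) (U₀ : Sub M) (h : U₀ ≠ ⊤) :
    ∃ (S : RMod k A) (s : M ⟶ S), Simple S ∧ (∀ x, Function.Surjective (s.app x)) ∧
      (∀ x m, m ∈ U₀.sub x → s.app x m = 0) ∧ s ≠ 0 := by
  obtain ⟨Um, hle, hproper, hmax⟩ := Sub.exists_maximal hfg U₀ h
  refine ⟨Sub.quotObj Um, Um.proj, simple_of_maximal Um hproper hmax,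
    Um.proj_surjective, ?_, ?_⟩
  · intro x m hm
    exact (Um.proj_zero_iff m).mpr (hle x hm)
  · intro h0
    obtain ⟨x₀, m₀, hm₀⟩ : ∃ x m, m ∉ Um.sub x := by
      by_contra hcon
      push_neg at hcon
      exact hproper ((Sub.eq_top_iff' Um).mpr hcon)
    apply hm₀
    rw [← Um.proj_zero_iff m₀, h0]
    rfl

end
end St5

namespace St5
section
variable {k : Type} [Field k] {A : Type} [SmallCategory A] [Preadditive A]
  [CategoryTheory.Linear k A]

/-- Linear Yoneda equivalence for `RMod`. -/
def yonEquiv (x : A) (M : RMod k A) : (reprR k A x ⟶ M) ≃ M.obj.obj (op x) where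
  toFun α := α.app (op x) (𝟙 x)
  invFun m := HomData.toHom
    { app := fun y =>
        { toFun := fun f => M.obj.map (f : (unop y) ⟶ x).op m
          map_add' := by
            intro f g
            show M.obj.map ((f + g : (unop y) ⟶ x)).op m
              = M.obj.map (f : (unop y) ⟶ x).op m + M.obj.map (g : (unop y) ⟶ x).op m
            have h1 : ((f + g : (unop y) ⟶ x)).op = (f : (unop y) ⟶ x).op + g.op := rfl
            rw [h1, mapAdd M]
            rfl
          map_smul' := by
            intro r f
            show M.obj.map ((r • f : (unop y) ⟶ x)).op m
              = r • M.obj.map (f : (unop y) ⟶ x).op m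
            have h1 : ((r • f : (unop y) ⟶ x)).op = r • (f : (unop y) ⟶ x).op := rfl
            rw [h1, mapSmul M]
            rfl }
      naturality := by
        intro y y' g
        apply LinearMap.ext; intro f
        show M.obj.map (g.unop ≫ f).op m = M.obj.map g (M.obj.map (f : (unop y) ⟶ x).op m)
        have : (g.unop ≫ f).op = (f : (unop y) ⟶ x).op ≫ g := rfl
        rw [this, M.obj.map_comp]
        rfl }
  left_inv := by
    intro α
    apply hom_ext; intro y
    apply LinearMap.ext; intro f
    show M.obj.map (f : (unop y) ⟶ x).op (α.app (op x) (𝟙 x)) = α.app y f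
    have h1 := (nat_app α ((f : (unop y) ⟶ x).op) (𝟙 x)).symm
    refine h1.trans ?_
    congr 1
    show (f : (unop y) ⟶ x) ≫ 𝟙 x = f
    exact Category.comp_id _
  right_inv := by
    intro m
    show M.obj.map (𝟙 x).op m = m
    have : (𝟙 x).op = 𝟙 (op x) := rfl
    rw [this, M.obj.map_id]
    rfl

lemma yonEquiv_natural (x : A) {M N : RMod k A} (α : reprR k A x ⟶ M) (t : M ⟶ N) :
    yonEquiv x N (α ≫ t) = t.app (op x) (yonEquiv x M α) := rfl

end
end St5

namespace St5
section
variable {k : Type} [Field k] {A : Type} [SmallCategory A] [Preadditive A]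
  [CategoryTheory.Linear k A]

/-- Poset of finitely generated subfunctors. -/
def FGSubs (M : RMod k A) : Type := {U : Sub M // ∃ L, Sub.genSub L = U}

instance (M : RMod k A) : PartialOrder (FGSubs M) :=
  inferInstanceAs (PartialOrder {U : Sub M // ∃ L, Sub.genSub L = U})

instance (M : RMod k A) : Nonempty (FGSubs M) := ⟨⟨Sub.genSub [], ⟨_, rfl⟩⟩⟩

namespace Sub

/-- morphism from an inclusion of subfunctors -/
def homOfLe {M : RMod k A} {U V : Sub M} (h : U ≤ V) : U.toObj ⟶ V.toObj := HomData.toHom {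
  app x := Submodule.inclusion (h x)
  naturality := by intro x y f; apply LinearMap.ext; intro m; apply Subtype.ext; rfl }

lemma homOfLe_incl {M : RMod k A} {U V : Sub M} (h : U ≤ V) :
    homOfLe h ≫ V.incl = U.incl := by
  apply hom_ext; intro x; apply LinearMap.ext; intro m; rfl

end Sub

variable {M : RMod k A}

/-- diagram of finitely generated subfunctors -/
def fgDiagram (M : RMod k A) : FGSubs M ⥤ RMod k A where
  obj U := U.1.toObj
  map {U V} h := Sub.homOfLe (leOfHom h)
  map_id U := by apply hom_ext; intro x; apply LinearMap.ext; intro m; apply Subtype.ext; rfl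
  map_comp := by
    intros; apply hom_ext; intro x; apply LinearMap.ext; intro m; apply Subtype.ext; rfl

/-- tautological cocone on the diagram of f.g. subfunctors -/
def fgCocone (M : RMod k A) : Cocone (fgDiagram M) where
  pt := M
  ι := { app := fun U => U.1.incl
         naturality := by
           intro U V h
           apply hom_ext; intro x; apply LinearMap.ext; intro m; rfl }

def cycSub (x : Aᵒᵖ) (m : M.obj.obj x) : FGSubs M := ⟨Sub.genSub [⟨x, m⟩], ⟨_, rfl⟩⟩

lemma mem_cycSub (x : Aᵒᵖ) (m : M.obj.obj x) : m ∈ (cycSub x m).1.sub x :=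
  Sub.self_mem_genSub (List.mem_singleton_self _)

lemma fg_directed (U V : FGSubs M) : ∃ W : FGSubs M, U ≤ W ∧ V ≤ W := by
  obtain ⟨L1, h1⟩ := U.2
  obtain ⟨L2, h2⟩ := V.2
  refine ⟨⟨Sub.genSub (L1 ++ L2), ⟨_, rfl⟩⟩, ?_, ?_⟩
  · show U.1 ≤ Sub.genSub (L1 ++ L2)
    rw [← h1]
    exact Sub.genSub_le (fun p hp => Sub.self_mem_genSub (List.mem_append_left _ hp))
  · show V.1 ≤ Sub.genSub (L1 ++ L2)
    rw [← h2]
    exact Sub.genSub_le (fun p hp => Sub.self_mem_genSub (List.mem_append_right _ hp))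

lemma cocone_compat (s : Cocone (fgDiagram M)) {U V : FGSubs M} (h : U ≤ V) (x : Aᵒᵖ)
    (m : M.obj.obj x) (hm : m ∈ U.1.sub x) :
    (s.ι.app U).app x ⟨m, hm⟩ = (s.ι.app V).app x ⟨m, h x hm⟩ := by
  have hw := s.w (homOfLE h)
  have h2 := congrArg (fun (t : U.1.toObj ⟶ s.pt) => t.app x ⟨m, hm⟩) hw
  exact h2.symm

lemma cocone_val_eq (s : Cocone (fgDiagram M)) {U V : FGSubs M} (x : Aᵒᵖ)
    (m : M.obj.obj x) (hU : m ∈ U.1.sub x) (hV : m ∈ V.1.sub x) :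
    (s.ι.app U).app x ⟨m, hU⟩ = (s.ι.app V).app x ⟨m, hV⟩ := by
  obtain ⟨W, hUW, hVW⟩ := fg_directed U V
  rw [cocone_compat s hUW x m hU, cocone_compat s hVW x m hV]

/-- value of a cocone on an element -/
def sval (s : Cocone (fgDiagram M)) (x : Aᵒᵖ) (m : M.obj.obj x) : s.pt.obj.obj x :=
  (s.ι.app (cycSub x m)).app x ⟨m, mem_cycSub x m⟩

lemma sval_eq (s : Cocone (fgDiagram M)) (x : Aᵒᵖ) (m : M.obj.obj x)
    (U : FGSubs M) (hm : m ∈ U.1.sub x) :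
    sval s x m = (s.ι.app U).app x ⟨m, hm⟩ :=
  cocone_val_eq s x m (mem_cycSub x m) hm

/-- the descended morphism -/
def fgDesc (s : Cocone (fgDiagram M)) : M ⟶ s.pt := HomData.toHom {
  app x :=
    { toFun := sval s x
      map_add' := by
        intro m m'
        show sval s x (m + m') = sval s x m + sval s x m'
        set W : FGSubs M := ⟨Sub.genSub [⟨x, m⟩, ⟨x, m'⟩], ⟨_, rfl⟩⟩ with hW
        have hm : m ∈ W.1.sub x := Sub.self_mem_genSub (List.mem_cons_self)
        have hm' : m' ∈ W.1.sub x :=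
          Sub.self_mem_genSub (List.mem_cons_of_mem _ (List.mem_cons_self))
        have hmm : m + m' ∈ W.1.sub x := Submodule.add_mem _ hm hm'
        rw [sval_eq s x (m + m') W hmm, sval_eq s x m W hm, sval_eq s x m' W hm']
        have h2 : (⟨m + m', hmm⟩ : W.1.sub x) = ⟨m, hm⟩ + ⟨m', hm'⟩ := rfl
        rw [h2]; exact map_add _ _ _
      map_smul' := by
        intro r m
        show sval s x (r • m) = r • sval s x m
        have hm : m ∈ (cycSub x m).1.sub x := mem_cycSub x m
        have hrm : r • m ∈ (cycSub x m).1.sub x := Submodule.smul_mem _ r hm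
        rw [sval_eq s x (r • m) (cycSub x m) hrm]
        have h2 : (⟨r • m, hrm⟩ : (cycSub x m).1.sub x) = r • ⟨m, hm⟩ := rfl
        rw [h2]
        exact map_smul _ _ _ }
  naturality := by
    intro x y g
    apply LinearMap.ext; intro m
    show sval s y (M.obj.map g m) = s.pt.obj.map g (sval s x m)
    have hmem : M.obj.map g m ∈ (cycSub x m).1.sub y :=
      (cycSub x m).1.map_mem g (mem_cycSub x m)
    rw [sval_eq s y (M.obj.map g m) (cycSub x m) hmem]
    have h1 : (⟨M.obj.map g m, hmem⟩ : (cycSub x m).1.sub y)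
        = ((cycSub x m).1.toObj).obj.map g ⟨m, mem_cycSub x m⟩ := by
      apply Subtype.ext; rfl
    rw [h1]
    exact nat_app (s.ι.app (cycSub x m)) g ⟨m, mem_cycSub x m⟩ }

/-- the tautological cocone is a colimit -/
def fgIsColimit (M : RMod k A) : IsColimit (fgCocone M) where
  desc := fgDesc
  fac := by
    intro s U
    apply hom_ext; intro x; apply LinearMap.ext; intro m
    show sval s x m.1 = (s.ι.app U).app x m
    rw [sval_eq s x m.1 U m.2]
    exact congrArg ((s.ι.app U).app x) (Subtype.ext rfl)
  uniq := by
    intro s t ht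
    apply hom_ext; intro x; apply LinearMap.ext; intro m
    have h1 := congrArg (fun (u : (cycSub x m).1.toObj ⟶ s.pt) =>
      u.app x ⟨m, mem_cycSub x m⟩) (ht (cycSub x m))
    exact h1

end
end St5

namespace St5
section
variable {k : Type} [Field k] {A : Type} [SmallCategory A] [Preadditive A]
  [CategoryTheory.Linear k A]

/-- Elements in the image of a colimit-preserving functor applied to the union of
f.g. subfunctors factor through one of them. -/
lemma exists_fg_factor (T T' : RMod k A ⥤ RMod k A) (adj : T ⊣ T') (M : RMod k A)
    (x : Aᵒᵖ) (v : (T.obj M).obj.obj x) :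
    ∃ (U : FGSubs M) (w : (T.obj U.1.toObj).obj.obj x), (T.map U.1.incl).app x w = v := by
  letI : Limits.PreservesColimitsOfSize.{0, 0} T := adj.leftAdjoint_preservesColimits
  have hc : IsColimit (T.mapCocone (fgCocone M)) := isColimitOfPreserves T (fgIsColimit M)
  -- the union of the images
  have hranges : ∀ {U V : FGSubs M} (h : U ≤ V) (y : Aᵒᵖ),
      LinearMap.range ((T.map U.1.incl).app y) ≤ LinearMap.range ((T.map V.1.incl).app y) := by
    intro U V h y
    rintro n ⟨w, rfl⟩
    refine ⟨(T.map (Sub.homOfLe (fun z => h z))).app y w, ?_⟩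
    have h1 : T.map (Sub.homOfLe (fun z => h z)) ≫ T.map V.1.incl = T.map U.1.incl := by
      rw [← T.map_comp, Sub.homOfLe_incl]
    have := congrArg (fun (t : T.obj U.1.toObj ⟶ T.obj M) => t.app y w) h1
    exact this
  have hdir : ∀ (y : Aᵒᵖ), Directed (· ≤ ·)
      (fun U : FGSubs M => LinearMap.range ((T.map U.1.incl).app y)) := by
    intro y U V
    obtain ⟨W, hUW, hVW⟩ := fg_directed U V
    exact ⟨W, hranges hUW y, hranges hVW y⟩
  let Z : Sub (T.obj M) :=
    { sub := fun y => ⨆ U : FGSubs M, LinearMap.range ((T.map U.1.incl).app y)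
      map_mem := by
        intro y z g n hn
        obtain ⟨U, hU⟩ := (Submodule.mem_iSup_of_directed _ (hdir y)).mp hn
        obtain ⟨w, rfl⟩ := hU
        refine le_iSup (fun U : FGSubs M =>
          LinearMap.range ((T.map U.1.incl).app z)) U ?_
        refine ⟨(T.obj U.1.toObj).obj.map g w, ?_⟩
        exact (nat_app (T.map U.1.incl) g w).symm ▸ (nat_app (T.map U.1.incl) g w) }
  -- the cocone through Z
  let s' : Cocone (fgDiagram M ⋙ T) :=
    { pt := Z.toObj
      ι :=
        { app := fun U => HomData.toHom
            { app := fun y => LinearMap.codRestrict (Z.sub y) ((T.map U.1.incl).app y)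
                (fun w => le_iSup (fun U : FGSubs M =>
                  LinearMap.range ((T.map U.1.incl).app y)) U ⟨w, rfl⟩)
              naturality := by
                intro y z g
                apply LinearMap.ext; intro w
                apply Subtype.ext
                exact nat_app (T.map U.1.incl) g w }
          naturality := by
            intro U V h
            apply hom_ext; intro y
            apply LinearMap.ext; intro w
            apply Subtype.ext
            show (T.map V.1.incl).app y ((T.map ((fgDiagram M).map h)).app y w)
              = (T.map U.1.incl).app y w
            have h1 : T.map ((fgDiagram M).map h) ≫ T.map V.1.incl = T.map U.1.incl := by
              have h2 : (fgDiagram M).map h = Sub.homOfLe (leOfHom h) := rfl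
              exact (T.map_comp _ _).symm.trans (congrArg T.map (Sub.homOfLe_incl (leOfHom h)))
            exact congrArg (fun (t : T.obj U.1.toObj ⟶ T.obj M) => t.app y w) h1 } }
  have hfac : ∀ U : FGSubs M, T.map U.1.incl ≫ hc.desc s' = s'.ι.app U := fun U => hc.fac s' U
  have hid : hc.desc s' ≫ Z.incl = 𝟙 (T.obj M) := by
    refine hc.hom_ext (fun U => ?_)
    rw [← Category.assoc]
    show (T.map U.1.incl ≫ hc.desc s') ≫ Z.incl = T.map U.1.incl ≫ 𝟙 (T.obj M)
    rw [hfac U, Category.comp_id]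
    apply hom_ext; intro y; apply LinearMap.ext; intro w
    rfl
  -- now v is in Z
  have hv : v ∈ Z.sub x := by
    have := congrArg (fun (t : T.obj M ⟶ T.obj M) => t.app x v) hid
    have h2 : Z.incl.app x ((hc.desc s').app x v) = v := this
    rw [← h2]
    exact ((hc.desc s').app x v).2
  obtain ⟨U, hU⟩ := (Submodule.mem_iSup_of_directed _ (hdir x)).mp hv
  obtain ⟨w, hw⟩ := hU
  exact ⟨U, w, hw⟩

end
end St5

namespace St5
section
variable {k : Type} [Field k] {A : Type} [SmallCategory A] [Preadditive A]
  [CategoryTheory.Linear k A]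

/-- The value of a biadjoint functor on a representable is finitely generated. -/
lemma FGobj_of_biadj (T T' : RMod k A ⥤ RMod k A) (aT : T ⊣ T') (bT : T' ⊣ T) (x : A) :
    FGobj (T'.obj (reprR k A x)) := by
  set N := T'.obj (reprR k A x) with hN
  let e : ∀ V : RMod k A, (N ⟶ V) ≃ ((T.obj V).obj.obj (op x)) := fun V =>
    (bT.homEquiv (reprR k A x) V).trans (yonEquiv x (T.obj V))
  have he : ∀ {V V' : RMod k A} (g : N ⟶ V) (t : V ⟶ V'),
      e V' (g ≫ t) = (T.map t).app (op x) (e V g) := by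
    intro V V' g t
    show yonEquiv x (T.obj V') (bT.homEquiv _ _ (g ≫ t))
      = (T.map t).app (op x) (yonEquiv x (T.obj V) (bT.homEquiv _ _ g))
    rw [Adjunction.homEquiv_naturality_right]
    exact yonEquiv_natural x _ (T.map t)
  obtain ⟨U, w, hw⟩ := exists_fg_factor T T' aT N (op x) (e N (𝟙 N))
  set wh := (e U.1.toObj).symm w with hwh
  have hsec : wh ≫ U.1.incl = 𝟙 N := by
    apply (e N).injective
    rw [he wh U.1.incl]
    rw [hwh, Equiv.apply_symm_apply]
    exact hw
  have hUtop : U.1 = ⊤ := by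
    rw [Sub.eq_top_iff']
    intro y m
    have h1 := congrArg (fun (t : N ⟶ N) => t.app y m) hsec
    have h2 : U.1.incl.app y (wh.app y m) = m := h1
    rw [← h2]
    exact (wh.app y m).2
  obtain ⟨L, hL⟩ := U.2
  exact ⟨L, hL.trans hUtop⟩

/-- Left adjoints preserve pointwise surjectivity. -/
lemma surj_map_of_adj (T T' : RMod k A ⥤ RMod k A) (aT : T ⊣ T') {V W : RMod k A}
    (f : V ⟶ W) (hf : ∀ y, Function.Surjective (f.app y)) (y : Aᵒᵖ) :
    Function.Surjective ((T.map f).app y) := by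
  have hepi : Epi f := by
    constructor
    intro Z g h hgh
    apply hom_ext; intro z; apply LinearMap.ext; intro m
    obtain ⟨m', rfl⟩ := hf z m
    exact congrArg (fun (t : V ⟶ Z) => t.app z m') hgh
  have hepi2 : Epi (T.map f) := by
    constructor
    intro Z g h hgh
    have h1 : f ≫ aT.homEquiv W Z g = f ≫ aT.homEquiv W Z h := by
      rw [← Adjunction.homEquiv_naturality_left, ← Adjunction.homEquiv_naturality_left, hgh]
    have h2 := hepi.left_cancellation _ _ h1
    exact (aT.homEquiv W Z).injective h2
  -- epi implies pointwise surjective via quotient by the image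
  set I := Sub.smap (T.map f) ⊤ with hI
  have hzero : T.map f ≫ I.proj = T.map f ≫ 0 := by
    rw [comp_zero, hom_eq_zero_iff]
    intro z n
    show I.proj.app z ((T.map f).app z n) = 0
    exact (I.proj_zero_iff _).mpr ⟨n, trivial, rfl⟩
  have hproj0 : I.proj = 0 := hepi2.left_cancellation _ _ hzero
  intro n
  have h3 : I.proj.app y n = 0 := by rw [hproj0]; rfl
  have h4 : n ∈ I.sub y := (I.proj_zero_iff n).mp h3
  obtain ⟨w, _, hw⟩ := Submodule.mem_map.mp h4
  exact ⟨w, hw⟩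

end
end St5

namespace St5
section
variable {k : Type} [Field k] {A : Type} [SmallCategory A] [Preadditive A]
  [CategoryTheory.Linear k A]
variable {F G Fb Gb : RMod k A ⥤ RMod k A}

/-- The (objectwise) mate of `η`. -/
def theta (bF : Fb ⊣ F) (bG : Gb ⊣ G) (η : F ⟶ G) (x : A) :
    Gb.obj (reprR k A x) ⟶ Fb.obj (reprR k A x) :=
  Gb.map (bF.unit.app (reprR k A x) ≫ η.app (Fb.obj (reprR k A x)))
    ≫ bG.counit.app (Fb.obj (reprR k A x))

lemma square (bF : Fb ⊣ F) (bG : Gb ⊣ G) (η : F ⟶ G) (x : A) (V : RMod k A)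
    (r : Fb.obj (reprR k A x) ⟶ V) :
    bG.homEquiv (reprR k A x) V (theta bF bG η x ≫ r)
      = bF.homEquiv (reprR k A x) V r ≫ η.app V := by
  rw [Adjunction.homEquiv_unit, Adjunction.homEquiv_unit]
  have h1 : theta bF bG η x ≫ r
      = Gb.map (bF.unit.app (reprR k A x) ≫ η.app (Fb.obj (reprR k A x)))
          ≫ (bG.counit.app (Fb.obj (reprR k A x)) ≫ r) := by
    rw [theta, Category.assoc]
  rw [h1, G.map_comp, ← Category.assoc]
  have h2 : bG.unit.app (reprR k A x)
        ≫ G.map (Gb.map (bF.unit.app (reprR k A x) ≫ η.app (Fb.obj (reprR k A x))))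
      = (bF.unit.app (reprR k A x) ≫ η.app (Fb.obj (reprR k A x)))
          ≫ bG.unit.app (G.obj (Fb.obj (reprR k A x))) := by
    simpa using (bG.unit.naturality
      (bF.unit.app (reprR k A x) ≫ η.app (Fb.obj (reprR k A x)))).symm
  rw [h2, G.map_comp]
  simp only [Category.assoc]
  rw [Adjunction.right_triangle_components_assoc]
  rw [← η.naturality r]

/-- The mate is an isomorphism (the core argument). -/
lemma theta_iso (aF : F ⊣ Fb) (bF : Fb ⊣ F) (aG : G ⊣ Gb) (bG : Gb ⊣ G) (η : F ⟶ G)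
    (hη : ∀ L : RMod k A, Simple L → IsIso (η.app L)) (x : A) :
    IsIso (theta bF bG η x) := by
  set P := reprR k A x with hP
  set θ := theta bF bG η x with hθ
  have hMMfg : FGobj (Gb.obj P) := FGobj_of_biadj G Gb aG bG x
  have hNNfg : FGobj (Fb.obj P) := FGobj_of_biadj F Fb aF bF x
  have hPhi : ∀ (V : RMod k A), IsIso (η.app V) →
      Function.Bijective (fun r : Fb.obj P ⟶ V => θ ≫ r) := by
    intro V hV
    have hform : ∀ r : Fb.obj P ⟶ V,
        θ ≫ r = (bG.homEquiv P V).symm (bF.homEquiv P V r ≫ η.app V) := by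
      intro r
      rw [← square bF bG η x V r]
      exact (Equiv.symm_apply_apply _ _).symm
    have hmid : Function.Bijective (fun t : P ⟶ F.obj V => t ≫ η.app V) := by
      constructor
      · intro a b hab
        have := congrArg (fun t => t ≫ inv (η.app V)) hab
        simpa using this
      · intro c
        exact ⟨c ≫ inv (η.app V), by simp⟩
    have hcomp : (fun r : Fb.obj P ⟶ V => θ ≫ r)
        = (bG.homEquiv P V).symm ∘ (fun t : P ⟶ F.obj V => t ≫ η.app V)
          ∘ (bF.homEquiv P V) := funext hform
    rw [hcomp]
    exact (bG.homEquiv P V).symm.bijective.comp (hmid.comp (bF.homEquiv P V).bijective)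
  -- Step 1 : pointwise surjectivity of θ
  have himtop : Sub.smap θ ⊤ = (⊤ : Sub (Fb.obj P)) := by
    by_contra hprop
    obtain ⟨S, s, hS, hssurj, hkill, hsne⟩ := exists_simple_quot hNNfg (Sub.smap θ ⊤) hprop
    have h0 : θ ≫ s = 0 := by
      rw [hom_eq_zero_iff]
      intro z m
      exact hkill z _ ⟨m, trivial, rfl⟩
    have hbij := hPhi S (hη S hS)
    apply hsne
    apply hbij.injective (a₁ := s) (a₂ := 0)
    show θ ≫ s = θ ≫ 0
    rw [h0, comp_zero]
  have hsurj : ∀ y, Function.Surjective (θ.app y) := by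
    intro y n
    have hmem : n ∈ (Sub.smap θ ⊤).sub y := by rw [himtop]; trivial
    obtain ⟨m, _, hm⟩ := Submodule.mem_map.mp hmem
    exact ⟨m, hm⟩
  -- Step 2 : pointwise injectivity of θ
  have hFsurj : ∀ y, Function.Surjective ((F.map θ).app y) :=
    fun y => surj_map_of_adj F Fb aF θ hsurj y
  let e : ∀ V : RMod k A, (Fb.obj P ⟶ V) ≃ ((F.obj V).obj.obj (op x)) := fun V =>
    (bF.homEquiv P V).trans (yonEquiv x (F.obj V))
  have he : ∀ {V V' : RMod k A} (g : Fb.obj P ⟶ V) (t : V ⟶ V'),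
      e V' (g ≫ t) = (F.map t).app (op x) (e V g) := by
    intro V V' g t
    show yonEquiv x (F.obj V') (bF.homEquiv _ _ (g ≫ t))
      = (F.map t).app (op x) (yonEquiv x (F.obj V) (bF.homEquiv _ _ g))
    rw [Adjunction.homEquiv_naturality_right]
    exact yonEquiv_natural x _ (F.map t)
  obtain ⟨ρ, hρ⟩ : ∃ ρ : Fb.obj P ⟶ Gb.obj P, ρ ≫ θ = 𝟙 (Fb.obj P) := by
    obtain ⟨w, hw⟩ := hFsurj (op x) (e (Fb.obj P) (𝟙 (Fb.obj P)))
    refine ⟨(e (Gb.obj P)).symm w, (e (Fb.obj P)).injective ?_⟩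
    rw [he _ θ, Equiv.apply_symm_apply]
    exact hw
  set K := Sub.kerSub θ with hK
  set δ : Gb.obj P ⟶ Gb.obj P := 𝟙 (Gb.obj P) - θ ≫ ρ with hδ
  have hδθ : δ ≫ θ = 0 := by
    rw [hδ, Preadditive.sub_comp, Category.id_comp, Category.assoc, hρ, Category.comp_id,
      sub_self]
  have hδK : ∀ y m, δ.app y m ∈ K.sub y := by
    intro y m
    show θ.app y (δ.app y m) = 0
    exact congrArg (fun (t : Gb.obj P ⟶ Fb.obj P) => t.app y m) hδθ
  let rK : Gb.obj P ⟶ K.toObj := HomData.toHom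
    { app := fun y => LinearMap.codRestrict (K.sub y) (δ.app y) (hδK y)
      naturality := by
        intro y z g
        apply LinearMap.ext; intro m
        apply Subtype.ext
        exact nat_app δ g m }
  have hrK : ∀ y (κ : K.toObj.obj.obj y), rK.app y (K.incl.app y κ) = κ := by
    intro y κ
    apply Subtype.ext
    show δ.app y κ.1 = κ.1
    have h1 : δ.app y κ.1 = κ.1 - ρ.app y (θ.app y κ.1) := rfl
    have h3 : θ.app y κ.1 = 0 := κ.2
    rw [h1, h3, map_zero, sub_zero]
  have hinj : ∀ y, Function.Injective (θ.app y) := by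
    suffices hker : ∀ z m, θ.app z m = 0 → m = 0 by
      intro y a b hab
      have h4 : θ.app y (a - b) = 0 := by rw [map_sub, hab, sub_self]
      exact sub_eq_zero.mp (hker y (a - b) h4)
    by_contra hcon
    push_neg at hcon
    obtain ⟨z, m, hm0, hmne⟩ := hcon
    have hKprop : (⊥ : Sub K.toObj) ≠ ⊤ := by
      intro htop
      apply hmne
      have hmem : (⟨m, hm0⟩ : K.sub z) ∈ (⊥ : Sub K.toObj).sub z := by rw [htop]; trivial
      have : (⟨m, hm0⟩ : K.sub z) = 0 := (Submodule.mem_bot _).mp hmem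
      exact congrArg Subtype.val this
    have hrKsurj : ∀ y, Function.Surjective (rK.app y) := by
      intro y κ
      exact ⟨K.incl.app y κ, hrK y κ⟩
    have hKfg : FGobj K.toObj := FGobj_of_surj rK hrKsurj hMMfg
    obtain ⟨S, σ, hS, hσsurj, _, hσne⟩ := exists_simple_quot hKfg ⊥ hKprop
    have hbij := hPhi S (hη S hS)
    obtain ⟨g, hg0⟩ := hbij.surjective (rK ≫ σ)
    have hg : θ ≫ g = rK ≫ σ := hg0
    apply hσne
    rw [hom_eq_zero_iff]
    intro y κ
    have h1 : (rK ≫ σ).app y (K.incl.app y κ) = σ.app y κ := by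
      show σ.app y (rK.app y (K.incl.app y κ)) = σ.app y κ
      rw [hrK]
    have h2 : (θ ≫ g).app y (K.incl.app y κ) = 0 := by
      show g.app y (θ.app y κ.1) = 0
      have h3 : θ.app y κ.1 = 0 := κ.2
      rw [h3, map_zero]
    calc σ.app y κ = (rK ≫ σ).app y (K.incl.app y κ) := h1.symm
      _ = (θ ≫ g).app y (K.incl.app y κ) := by rw [hg]
      _ = 0 := h2
  exact isIso_of_bijective θ (fun y => ⟨hinj y, hsurj y⟩)

end
end St5

theorem statement_5'
    {k : Type} [Field k] {A : Type} [SmallCategory A] [Preadditive A]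
    [CategoryTheory.Linear k A]
    (F G : RMod k A ⥤ RMod k A)
    (hF : IsSweet F) (hG : IsSweet G)
    (η : F ⟶ G)
    (hη : ∀ L : RMod k A, Simple L → IsIso (η.app L)) :
    IsIso η := by
  obtain ⟨Fb, ⟨bF⟩, ⟨aF⟩⟩ := hF
  obtain ⟨Gb, ⟨bG⟩, ⟨aG⟩⟩ := hG
  have happ : ∀ V : RMod k A, IsIso (η.app V) := by
    intro V
    apply St5.isIso_of_bijective
    intro y
    have hθ : IsIso (St5.theta bF bG η (unop y)) := St5.theta_iso aF bF aG bG η hη (unop y)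
    have hpre : Function.Bijective
        (fun r : Fb.obj (reprR k A (unop y)) ⟶ V => St5.theta bF bG η (unop y) ≫ r) := by
      constructor
      · intro a b hab
        have h2 := congrArg (fun t => inv (St5.theta bF bG η (unop y)) ≫ t) hab
        simpa using h2
      · intro c
        exact ⟨inv (St5.theta bF bG η (unop y)) ≫ c, by simp⟩
    have hform : ∀ r : reprR k A (unop y) ⟶ F.obj V,
        r ≫ η.app V
          = bG.homEquiv _ V (St5.theta bF bG η (unop y) ≫ (bF.homEquiv _ V).symm r) := by
      intro r
      rw [St5.square bF bG η (unop y) V ((bF.homEquiv _ V).symm r), Equiv.apply_symm_apply]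
    have hpost : Function.Bijective
        (fun r : reprR k A (unop y) ⟶ F.obj V => r ≫ η.app V) := by
      have hcomp : (fun r : reprR k A (unop y) ⟶ F.obj V => r ≫ η.app V)
          = (bG.homEquiv _ V) ∘ (fun r => St5.theta bF bG η (unop y) ≫ r)
            ∘ (bF.homEquiv _ V).symm := funext hform
      rw [hcomp]
      exact (bG.homEquiv _ V).bijective.comp (hpre.comp (bF.homEquiv _ V).symm.bijective)
    have hco : ⇑((η.app V).app y)
        = (St5.yonEquiv (unop y) (G.obj V)) ∘ (fun r => r ≫ η.app V)
          ∘ (St5.yonEquiv (unop y) (F.obj V)).symm := by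
      funext m
      exact ((St5.yonEquiv_natural (unop y)
        ((St5.yonEquiv (unop y) (F.obj V)).symm m) (η.app V)).trans
        (congrArg _ (Equiv.apply_symm_apply _ _))).symm
    rw [hco]
    exact (St5.yonEquiv (unop y) (G.obj V)).bijective.comp
      (hpost.comp (St5.yonEquiv (unop y) (F.obj V)).symm.bijective)
  haveI : ∀ V, IsIso (η.app V) := happ
  exact NatIso.isIso_of_isIso_app η
theorem statement_5
    (hfd : ∀ x y : A, FiniteDimensional k (x ⟶ y))
    (F G : RMod k A ⥤ RMod k A)
    (hFlin : IsKLinear k F) (hGlin : IsKLinear k G)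
    (hF : IsSweet F) (hG : IsSweet G)
    (η : F ⟶ G)
    (hη : ∀ L : RMod k A, Simple L → IsIso (η.app L)) :
    IsIso η := by
  exact statement_5' F G hF hG η hη

end
end

section
/- Let k be a field, n ≥ 1, and R_n = k[X_1,…,X_n]. The multiplication operators m_{X_i} and the Demazure operators ∂_i satisfy the defining relations of the nil Hecke algebra in End_k(R_n): (i) ∂_i ∘ ∂_i = 0 for all 1 ≤ i ≤ n−1; (ii) ∂_i ∘ ∂_j = ∂_j ∘ ∂_i whenever |i − j| ≥ 2; (iii) ∂_i ∘ ∂_{i+1} ∘ ∂_i = ∂_{i+1} ∘ ∂_i ∘ ∂_{i+1} for 1 ≤ i ≤ n−2; (iv) m_{X_{i+1}} ∘ ∂_i − ∂_i ∘ m_{X_i} = id and ∂_i ∘ m_{X_{i+1}} − m_{X_i} ∘ ∂_i = id; (v) ∂_i commutes with m_{X_j} whenever j ∉ {i, i+1}, and all multiplication operators commute with each other. In particular, the polynomial representation of the nil Hecke algebra NH_n on R_n is well defined. -/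
/-!
STATEMENT 14: The multiplication operators and Demazure operators on
`R = k[X_1, …, X_n]` (here realized with `n + 1` variables, `n ≥ 0`, so that the
number of variables is an arbitrary integer `≥ 1`) satisfy the defining relations
of the nil Hecke algebra.

We quantify over any family `D i` of `k`-linear endomorphisms satisfying the
defining property of the Demazure operators
`(X_i − X_{i+1}) · D_i f = σ_i f − f`; this determines `D` uniquely since
`X_i − X_{i+1}` is a nonzerodivisor.
-/

open MvPolynomial

/-- The simple transposition `σ_i`, acting on polynomials by interchanging the
variables `X_i` and `X_{i+1}`. -/
noncomputable def simpleTransp {k : Type} [Field k] {n : ℕ}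
    (i : Fin n) (f : MvPolynomial (Fin (n + 1)) k) : MvPolynomial (Fin (n + 1)) k :=
  rename (Equiv.swap i.castSucc i.succ) f

/-- `D` is the family of Demazure operators: `D i` is the unique `k`-linear map with
`(X_i − X_{i+1}) · D_i f = σ_i f − f`. -/
def IsDemazureFamily {k : Type} [Field k] {n : ℕ}
    (D : Fin n → Module.End k (MvPolynomial (Fin (n + 1)) k)) : Prop :=
  ∀ (i : Fin n) (f : MvPolynomial (Fin (n + 1)) k),
    (X i.castSucc - X i.succ) * D i f = simpleTransp i f - f

lemma swap_comm_fun {α : Type} [DecidableEq α] {a b c d : α}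
    (hac : a ≠ c) (had : a ≠ d) (hbc : b ≠ c) (hbd : b ≠ d) (x : α) :
    Equiv.swap a b (Equiv.swap c d x) = Equiv.swap c d (Equiv.swap a b x) := by
  simp only [Equiv.swap_apply_def]
  split_ifs <;> simp_all

lemma swap_braid_fun {α : Type} [DecidableEq α] {a b c : α}
    (hab : a ≠ b) (hac : a ≠ c) (hbc : b ≠ c) (x : α) :
    Equiv.swap a b (Equiv.swap b c (Equiv.swap a b x))
      = Equiv.swap b c (Equiv.swap a b (Equiv.swap b c x)) := by
  rcases eq_or_ne x a with rfl | hxa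
  · simp [Equiv.swap_apply_def, hab, hac, hbc, hab.symm, hac.symm, hbc.symm]
  · rcases eq_or_ne x b with rfl | hxb
    · simp [Equiv.swap_apply_def, hab, hac, hbc, hab.symm, hac.symm, hbc.symm]
    · rcases eq_or_ne x c with rfl | hxc
      · simp [Equiv.swap_apply_def, hab, hac, hbc, hab.symm, hac.symm, hbc.symm]
      · simp [Equiv.swap_apply_def, hxa, hxb, hxc]

section Helpers

variable {k : Type} [Field k] {n : ℕ}

lemma st_mul (i : Fin n) (f g : MvPolynomial (Fin (n + 1)) k) :
    simpleTransp i (f * g) = simpleTransp i f * simpleTransp i g :=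
  map_mul (rename (Equiv.swap i.castSucc i.succ)) f g

lemma st_sub (i : Fin n) (f g : MvPolynomial (Fin (n + 1)) k) :
    simpleTransp i (f - g) = simpleTransp i f - simpleTransp i g :=
  map_sub (rename (Equiv.swap i.castSucc i.succ)).toLinearMap f g

lemma st_X_left (i : Fin n) :
    simpleTransp i (X i.castSucc : MvPolynomial (Fin (n + 1)) k) = X i.succ := by
  simp [simpleTransp]

lemma st_X_right (i : Fin n) :
    simpleTransp i (X i.succ : MvPolynomial (Fin (n + 1)) k) = X i.castSucc := by
  simp [simpleTransp]

lemma st_X_other (i : Fin n) (m : Fin (n + 1)) (h1 : m ≠ i.castSucc) (h2 : m ≠ i.succ) :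
    simpleTransp i (X m : MvPolynomial (Fin (n + 1)) k) = X m := by
  simp [simpleTransp, Equiv.swap_apply_of_ne_of_ne h1 h2]

lemma st_st (i : Fin n) (f : MvPolynomial (Fin (n + 1)) k) :
    simpleTransp i (simpleTransp i f) = f := by
  rw [simpleTransp, simpleTransp, rename_rename]
  have : (Equiv.swap i.castSucc i.succ : Fin (n+1) → Fin (n+1))
      ∘ (Equiv.swap i.castSucc i.succ) = id := funext fun x => Equiv.swap_apply_self _ _ x
  rw [this, rename_id, AlgHom.id_apply]

lemma ab_ne (i : Fin n) : (i.castSucc : Fin (n + 1)) ≠ i.succ :=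
  (Fin.castSucc_lt_succ : i.castSucc < i.succ).ne

lemma Xsub_ne {a b : Fin (n + 1)} (h : a ≠ b) :
    (X a - X b : MvPolynomial (Fin (n + 1)) k) ≠ 0 :=
  sub_ne_zero_of_ne fun e => h (X_injective e)

variable (D : Fin n → Module.End k (MvPolynomial (Fin (n + 1)) k))
  (hD : IsDemazureFamily D)

include hD

lemma sigma_fix (i : Fin n) (f : MvPolynomial (Fin (n + 1)) k) :
    simpleTransp i (D i f) = D i f := by
  apply mul_left_cancel₀ (Xsub_ne (ab_ne i))
  have h := congrArg (simpleTransp i) (hD i f)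
  simp only [st_mul, st_sub, st_X_left, st_X_right, st_st] at h
  linear_combination -h - hD i f

lemma D_mul (i : Fin n) (f g : MvPolynomial (Fin (n + 1)) k) :
    D i (f * g) = simpleTransp i f * D i g + D i f * g := by
  apply mul_left_cancel₀ (Xsub_ne (ab_ne i))
  rw [hD i (f * g), st_mul]
  linear_combination -(simpleTransp i f) * hD i g - g * hD i f

lemma D_X_left (i : Fin n) : D i (X i.castSucc) = -1 := by
  apply mul_left_cancel₀ (Xsub_ne (ab_ne i))
  have h := hD i (X i.castSucc)
  rw [st_X_left] at h
  linear_combination h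

lemma D_X_right (i : Fin n) : D i (X i.succ) = 1 := by
  apply mul_left_cancel₀ (Xsub_ne (ab_ne i))
  have h := hD i (X i.succ)
  rw [st_X_right] at h
  linear_combination h

lemma D_X_other (i : Fin n) (m : Fin (n + 1)) (h1 : m ≠ i.castSucc) (h2 : m ≠ i.succ) :
    D i (X m) = 0 := by
  have h := hD i (X m)
  rw [st_X_other i m h1 h2, sub_self] at h
  exact (mul_eq_zero.mp h).resolve_left (Xsub_ne (ab_ne i))

end Helpers

theorem statement_14 {k : Type} [Field k] {n : ℕ}
    (D : Fin n → Module.End k (MvPolynomial (Fin (n + 1)) k))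
    (hD : IsDemazureFamily D) :
    -- (i) `∂_i ∘ ∂_i = 0`
    (∀ i : Fin n, D i * D i = 0) ∧
    -- (ii) `∂_i ∘ ∂_j = ∂_j ∘ ∂_i` whenever `|i − j| ≥ 2`
    (∀ i j : Fin n, 2 ≤ Nat.dist i.val j.val → D i * D j = D j * D i) ∧
    -- (iii) the braid relation `∂_i ∘ ∂_{i+1} ∘ ∂_i = ∂_{i+1} ∘ ∂_i ∘ ∂_{i+1}`
    (∀ i j : Fin n, j.val = i.val + 1 → D i * D j * D i = D j * D i * D j) ∧
    -- (iv) `m_{X_{i+1}} ∘ ∂_i − ∂_i ∘ m_{X_i} = id` and `∂_i ∘ m_{X_{i+1}} − m_{X_i} ∘ ∂_i = id`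
    (∀ i : Fin n,
      Algebra.lmul k (MvPolynomial (Fin (n + 1)) k) (X i.succ) * D i
          - D i * Algebra.lmul k (MvPolynomial (Fin (n + 1)) k) (X i.castSucc) = 1 ∧
      D i * Algebra.lmul k (MvPolynomial (Fin (n + 1)) k) (X i.succ)
          - Algebra.lmul k (MvPolynomial (Fin (n + 1)) k) (X i.castSucc) * D i = 1) ∧
    -- (v) `∂_i` commutes with `m_{X_j}` for `j ∉ {i, i+1}`, and multiplication
    -- operators commute with each other
    (∀ (i : Fin n) (j : Fin (n + 1)), j ≠ i.castSucc → j ≠ i.succ →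
      D i * Algebra.lmul k (MvPolynomial (Fin (n + 1)) k) (X j)
        = Algebra.lmul k (MvPolynomial (Fin (n + 1)) k) (X j) * D i) ∧
    (∀ f g : MvPolynomial (Fin (n + 1)) k,
      Algebra.lmul k (MvPolynomial (Fin (n + 1)) k) f
          * Algebra.lmul k (MvPolynomial (Fin (n + 1)) k) g
        = Algebra.lmul k (MvPolynomial (Fin (n + 1)) k) g
          * Algebra.lmul k (MvPolynomial (Fin (n + 1)) k) f) := by
  refine ⟨?_, ?_, ?_, ?_, ?_, ?_⟩
  · -- (i)
    intro i
    refine LinearMap.ext fun f => ?_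
    simp only [Module.End.mul_apply, LinearMap.zero_apply]
    have h := hD i (D i f)
    rw [sigma_fix D hD i f, sub_self] at h
    exact (mul_eq_zero.mp h).resolve_left (Xsub_ne (ab_ne i))
  · -- (ii)
    intro i j hdist
    have hd2 : 2 ≤ i.val - j.val + (j.val - i.val) := hdist
    have hac : (i.castSucc : Fin (n+1)) ≠ j.castSucc :=
      Fin.ne_of_val_ne (by simp only [Fin.coe_castSucc]; omega)
    have had : (i.castSucc : Fin (n+1)) ≠ j.succ :=
      Fin.ne_of_val_ne (by simp only [Fin.coe_castSucc, Fin.val_succ]; omega)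
    have hbc : (i.succ : Fin (n+1)) ≠ j.castSucc :=
      Fin.ne_of_val_ne (by simp only [Fin.coe_castSucc, Fin.val_succ]; omega)
    have hbd : (i.succ : Fin (n+1)) ≠ j.succ :=
      Fin.ne_of_val_ne (by simp only [Fin.val_succ]; omega)
    have hSS : ∀ f : MvPolynomial (Fin (n+1)) k,
        simpleTransp i (simpleTransp j f) = simpleTransp j (simpleTransp i f) := by
      intro f
      rw [simpleTransp, simpleTransp, simpleTransp, simpleTransp, rename_rename, rename_rename]
      have hfun : (Equiv.swap i.castSucc i.succ : Fin (n+1) → Fin (n+1))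
          ∘ (Equiv.swap j.castSucc j.succ)
          = (Equiv.swap j.castSucc j.succ : Fin (n+1) → Fin (n+1))
          ∘ (Equiv.swap i.castSucc i.succ) := funext (swap_comm_fun hac had hbc hbd)
      rw [hfun]
    have hcomm : ∀ f : MvPolynomial (Fin (n+1)) k,
        simpleTransp i (D j f) = D j (simpleTransp i f) := by
      intro f
      apply mul_left_cancel₀ (Xsub_ne (ab_ne j))
      rw [hD j (simpleTransp i f)]
      have h := congrArg (simpleTransp i) (hD j f)
      simp only [st_mul, st_sub, st_X_other i j.castSucc hac.symm hbc.symm,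
        st_X_other i j.succ had.symm hbd.symm] at h
      rw [hSS f] at h
      exact h
    refine LinearMap.ext fun f => ?_
    simp only [Module.End.mul_apply]
    apply mul_left_cancel₀ (Xsub_ne (ab_ne i))
    have h6 : simpleTransp j (X i.castSucc - X i.succ : MvPolynomial (Fin (n+1)) k)
        = X i.castSucc - X i.succ := by
      rw [st_sub, st_X_other j i.castSucc hac had, st_X_other j i.succ hbc hbd]
    have h7 : D j (X i.castSucc - X i.succ : MvPolynomial (Fin (n+1)) k) = 0 := by
      rw [map_sub, D_X_other D hD j i.castSucc hac had, D_X_other D hD j i.succ hbc hbd,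
        sub_zero]
    rw [hD i (D j f), hcomm f, ← map_sub (D j), ← hD i f, D_mul D hD j, h6, h7]
    ring
  · -- (iii)
    intro i j hj
    have hjc : (j.castSucc : Fin (n+1)) = i.succ := Fin.ext (by simp [hj])
    have hab : (i.castSucc : Fin (n+1)) ≠ i.succ := ab_ne i
    have hbc : (i.succ : Fin (n+1)) ≠ j.succ :=
      Fin.ne_of_val_ne (by simp only [Fin.val_succ, hj]; omega)
    have hac : (i.castSucc : Fin (n+1)) ≠ j.succ :=
      Fin.ne_of_val_ne (by simp only [Fin.coe_castSucc, Fin.val_succ, hj]; omega)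
    have hab' : (i.castSucc : Fin (n+1)) ≠ j.castSucc := by rw [hjc]; exact hab
    have hDj' : ∀ g : MvPolynomial (Fin (n+1)) k,
        (X i.succ - X j.succ) * D j g = simpleTransp j g - g := by
      intro g; rw [← hjc]; exact hD j g
    have hSja : simpleTransp j (X i.castSucc : MvPolynomial (Fin (n+1)) k) = X i.castSucc :=
      st_X_other j i.castSucc hab' hac
    have hSjb : simpleTransp j (X i.succ : MvPolynomial (Fin (n+1)) k) = X j.succ := by
      rw [← hjc]; exact st_X_left j
    have hSjc : simpleTransp j (X j.succ : MvPolynomial (Fin (n+1)) k) = X i.succ := by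
      rw [st_X_right, hjc]
    have hSic : simpleTransp i (X j.succ : MvPolynomial (Fin (n+1)) k) = X j.succ :=
      st_X_other i j.succ hac.symm hbc.symm
    refine LinearMap.ext fun f => ?_
    simp only [Module.End.mul_apply]
    -- P side
    have e1 := hD i f
    have e2 := hDj' (D i f)
    have e3 := hD i (D j (D i f))
    have esh := congrArg (simpleTransp i) e2
    simp only [st_mul, st_sub, st_X_right, hSic, sigma_fix D hD] at esh
    have etg := congrArg (simpleTransp j) e1
    simp only [st_mul, st_sub, hSja, hSjb] at etg
    have estg := congrArg (simpleTransp i) etg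
    simp only [st_mul, st_sub, st_X_left, hSic] at estg
    have goalP : ((X i.castSucc - X j.succ) * ((X i.succ - X j.succ)
          * (X i.castSucc - X i.succ))) * D i (D j (D i f))
        = simpleTransp i (simpleTransp j (simpleTransp i f))
          - simpleTransp i (simpleTransp j f)
          - simpleTransp j (simpleTransp i f) + simpleTransp j f + simpleTransp i f - f := by
      linear_combination (X i.castSucc - X j.succ) * (X i.succ - X j.succ) * e3
        + (X i.succ - X j.succ) * esh - (X i.castSucc - X j.succ) * e2
        + estg - etg + e1
    -- Q side
    have e1' := hDj' f
    have e2' := hD i (D j f)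
    have e3' := hDj' (D i (D j f))
    have eth := congrArg (simpleTransp j) e2'
    simp only [st_mul, st_sub, hSja, hSjb, sigma_fix D hD] at eth
    have esg := congrArg (simpleTransp i) e1'
    simp only [st_mul, st_sub, st_X_right, hSic] at esg
    have etsg := congrArg (simpleTransp j) esg
    simp only [st_mul, st_sub, hSja, hSjc] at etsg
    have goalQ : ((X i.castSucc - X j.succ) * ((X i.succ - X j.succ)
          * (X i.castSucc - X i.succ))) * D j (D i (D j f))
        = simpleTransp j (simpleTransp i (simpleTransp j f))
          - simpleTransp j (simpleTransp i f)
          - simpleTransp i (simpleTransp j f) + simpleTransp i f + simpleTransp j f - f := by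
      linear_combination (X i.castSucc - X j.succ) * (X i.castSucc - X i.succ) * e3'
        + (X i.castSucc - X i.succ) * eth - (X i.castSucc - X j.succ) * e2'
        + etsg - esg + e1'
    have hbraid : simpleTransp i (simpleTransp j (simpleTransp i f))
        = simpleTransp j (simpleTransp i (simpleTransp j f)) := by
      simp only [simpleTransp, hjc, rename_rename]
      have hfun : (Equiv.swap i.castSucc i.succ : Fin (n+1) → Fin (n+1))
            ∘ (Equiv.swap i.succ j.succ) ∘ (Equiv.swap i.castSucc i.succ)
          = (Equiv.swap i.succ j.succ : Fin (n+1) → Fin (n+1))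
            ∘ (Equiv.swap i.castSucc i.succ) ∘ (Equiv.swap i.succ j.succ) :=
        funext (swap_braid_fun hab hac hbc)
      rw [hfun]
    have hM : ((X i.castSucc - X j.succ) * ((X i.succ - X j.succ)
          * (X i.castSucc - X i.succ)) : MvPolynomial (Fin (n+1)) k) ≠ 0 :=
      mul_ne_zero (Xsub_ne hac) (mul_ne_zero (Xsub_ne hbc) (Xsub_ne hab))
    apply mul_left_cancel₀ hM
    linear_combination goalP - goalQ + hbraid
  · -- (iv)
    intro i
    refine ⟨LinearMap.ext fun f => ?_, LinearMap.ext fun f => ?_⟩ <;>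
      simp only [LinearMap.sub_apply, Module.End.mul_apply, Module.End.one_apply,
        Algebra.coe_lmul_eq_mul, LinearMap.mul_apply']
    · rw [D_mul D hD, st_X_left, D_X_left D hD]; ring
    · rw [D_mul D hD, st_X_right, D_X_right D hD]; ring
  · -- (v)
    intro i m h1 h2
    refine LinearMap.ext fun f => ?_
    simp only [Module.End.mul_apply, Algebra.coe_lmul_eq_mul, LinearMap.mul_apply']
    rw [D_mul D hD, st_X_other i m h1 h2, D_X_other D hD i m h1 h2]; ring
  · intro f g
    refine LinearMap.ext fun h => ?_
    simp only [Module.End.mul_apply, Algebra.coe_lmul_eq_mul, LinearMap.mul_apply']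
    ring
end
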